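/- In the bidirectional structural model under Assumption 1, suppose σ > 0, μxz ≠ 0, μyw ≠ 0, βxy·βyx ≠ 1 and βxy·βyx ≠ −1. Define c = 1/(1 − βxy·βyx), λ1 = σ²c²(1 + βyx²), λ2 = σ²c²(1 + βxy²), and the Probit coefficients ξxz = c·μxz/√λ1, ξxw = c·βyx·μyw/√λ1, ξyz = c·βxy·μxz/√λ2, ξyw = c·μyw/√λ2. Then the reverse causal effect is identified by the formula βyx = (ξxw/ξyw)·√((ξyz²·ξyw² − ξxz²·ξyw²)/(ξxw²·ξxz² − ξxz²·ξyw²)). -/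

import Mathlib

/-- Proposition 1, reverse direction: identification of the
reverse causal effect in the bidirectional structural model under Assumption 1. -/
theorem stmt_6 (μx0 μy0 μxz μyw βxy βyx σ : ℝ)
    (hσ : 0 < σ) (hμxz : μxz ≠ 0) (hμyw : μyw ≠ 0)
    (h1 : βxy * βyx ≠ 1) (h2 : βxy * βyx ≠ -1)
    (c lam1 lam2 ξxz ξxw ξyz ξyw : ℝ)
    (hc : c = 1 / (1 - βxy * βyx))
    (hlam1 : lam1 = σ ^ 2 * c ^ 2 * (1 + βyx ^ 2))
    (hlam2 : lam2 = σ ^ 2 * c ^ 2 * (1 + βxy ^ 2))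
    (hξxz : ξxz = c * μxz / Real.sqrt lam1)
    (hξxw : ξxw = c * βyx * μyw / Real.sqrt lam1)
    (hξyz : ξyz = c * βxy * μxz / Real.sqrt lam2)
    (hξyw : ξyw = c * μyw / Real.sqrt lam2) :
    βyx = (ξxw / ξyw) * Real.sqrt ((ξyz ^ 2 * ξyw ^ 2 - ξxz ^ 2 * ξyw ^ 2) /
      (ξxw ^ 2 * ξxz ^ 2 - ξxz ^ 2 * ξyw ^ 2)) := by
  have hd : 1 - βxy * βyx ≠ 0 := by
    intro h; apply h1; linarith
  have hcne : c ≠ 0 := by rw [hc]; exact one_div_ne_zero hd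
  have hl1 : 0 < lam1 := by rw [hlam1]; positivity
  have hl2 : 0 < lam2 := by rw [hlam2]; positivity
  set s1 := Real.sqrt lam1 with hs1
  set s2 := Real.sqrt lam2 with hs2
  have hs1p : 0 < s1 := Real.sqrt_pos.2 hl1
  have hs2p : 0 < s2 := Real.sqrt_pos.2 hl2
  have hs1sq : s1 ^ 2 = lam1 := Real.sq_sqrt hl1.le
  have hs2sq : s2 ^ 2 = lam2 := Real.sq_sqrt hl2.le
  have hprod : βxy ^ 2 * βyx ^ 2 - 1 ≠ 0 := by
    intro h
    rcases mul_eq_zero.1 (show (βxy * βyx - 1) * (βxy * βyx + 1) = 0 by nlinarith) with h' | h'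
    · exact h1 (by linarith)
    · exact h2 (by linarith)
  -- squared coefficients
  have hxz2 : ξxz ^ 2 = c ^ 2 * μxz ^ 2 / lam1 := by
    rw [hξxz, div_pow, hs1sq]; ring
  have hxw2 : ξxw ^ 2 = c ^ 2 * βyx ^ 2 * μyw ^ 2 / lam1 := by
    rw [hξxw, div_pow, hs1sq]; ring
  have hyz2 : ξyz ^ 2 = c ^ 2 * βxy ^ 2 * μxz ^ 2 / lam2 := by
    rw [hξyz, div_pow, hs2sq]; ring
  have hyw2 : ξyw ^ 2 = c ^ 2 * μyw ^ 2 / lam2 := by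
    rw [hξyw, div_pow, hs2sq]; ring
  have hE : σ ^ 2 * c ^ 2 * (βxy ^ 2 * βyx ^ 2 - 1) ≠ 0 := by
    have : σ ^ 2 * c ^ 2 ≠ 0 := by positivity
    exact mul_ne_zero this hprod
  have hnum : ξyz ^ 2 * ξyw ^ 2 - ξxz ^ 2 * ξyw ^ 2 =
      c ^ 4 * μxz ^ 2 * μyw ^ 2 * (σ ^ 2 * c ^ 2 * (βxy ^ 2 * βyx ^ 2 - 1)) /
        (lam1 * lam2 ^ 2) := by
    rw [hxz2, hyz2, hyw2]
    have : βxy ^ 2 * lam1 - lam2 = σ ^ 2 * c ^ 2 * (βxy ^ 2 * βyx ^ 2 - 1) := by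
      rw [hlam1, hlam2]; ring
    field_simp
    linear_combination this
  have hden : ξxw ^ 2 * ξxz ^ 2 - ξxz ^ 2 * ξyw ^ 2 =
      c ^ 4 * μxz ^ 2 * μyw ^ 2 * (σ ^ 2 * c ^ 2 * (βxy ^ 2 * βyx ^ 2 - 1)) /
        (lam1 ^ 2 * lam2) := by
    rw [hxz2, hxw2, hyw2]
    have : βyx ^ 2 * lam2 - lam1 = σ ^ 2 * c ^ 2 * (βxy ^ 2 * βyx ^ 2 - 1) := by
      rw [hlam1, hlam2]; ring
    field_simp
    linear_combination this
  have harg : (ξyz ^ 2 * ξyw ^ 2 - ξxz ^ 2 * ξyw ^ 2) /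
      (ξxw ^ 2 * ξxz ^ 2 - ξxz ^ 2 * ξyw ^ 2) = lam1 / lam2 := by
    have hN : c ^ 4 * μxz ^ 2 * μyw ^ 2 * (σ ^ 2 * c ^ 2 * (βxy ^ 2 * βyx ^ 2 - 1)) ≠ 0 := by
      refine mul_ne_zero (mul_ne_zero (mul_ne_zero (pow_ne_zero _ hcne) (pow_ne_zero _ hμxz)) (pow_ne_zero _ hμyw)) hE
    rw [hnum, hden]
    rw [div_div_div_eq]
    field_simp
  rw [harg, Real.sqrt_div hl1.le, ← hs1, ← hs2, hξxw, hξyw]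
  field_simp
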